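/- arXiv:2508.19817 — 3 statements merged into one kernel-verified Lean document; each statement's English description precedes it below -/
import Mathlib

section
/- Let γ, ψ, β, N > 0 and μ + λ > δ, and define R₀ = βψN / ((γ+ψ)(μ+λ−δ)). Then both eigenvalues of the matrix J = [[−(γ+ψ), βN],[ψ, δ−μ−λ]] have negative real part if and only if R₀ < 1. -/
open Matrix

/-- Both eigenvalues of the infected-subsystem Jacobian at the
scam-free equilibrium have negative real part iff `R₀ < 1`. -/
theorem sfe_local_stability
    (γ ψ δ μ lam β N : ℝ)
    (hγ : 0 < γ) (hψ : 0 < ψ) (hβ : 0 < β) (hN : 0 < N)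
    (hmld : μ + lam > δ)
    (R₀ : ℝ) (hR₀ : R₀ = β * ψ * N / ((γ + ψ) * (μ + lam - δ)))
    (J : Matrix (Fin 2) (Fin 2) ℝ)
    (hJ : J = !![-(γ + ψ), β * N; ψ, δ - μ - lam]) :
    (∀ z : ℂ, z ∈ spectrum ℂ (J.map (algebraMap ℝ ℂ)) → z.re < 0) ↔ R₀ < 1 := by
  set a : ℝ := γ + ψ with ha
  set c : ℝ := μ + lam - δ with hc
  have hapos : 0 < a := by positivity
  have hcpos : 0 < c := by linarith
  have hspec : ∀ z : ℂ, z ∈ spectrum ℂ (J.map (algebraMap ℝ ℂ)) ↔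
      (z + a) * (z + c) - (β * N * ψ : ℝ) = 0 := by
    intro z
    rw [spectrum.mem_iff, Matrix.isUnit_iff_isUnit_det, isUnit_iff_ne_zero, not_not]
    have hM : (algebraMap ℂ (Matrix (Fin 2) (Fin 2) ℂ)) z - J.map (algebraMap ℝ ℂ)
        = !![z + a, -(β*N : ℝ); -(ψ:ℝ), z + c] := by
      subst hJ
      ext i j
      fin_cases i <;> fin_cases j <;>
        simp [Matrix.algebraMap_eq_diagonal, Matrix.map_apply, hc] <;> push_cast <;> ring
    rw [hM, Matrix.det_fin_two_of]
    push_cast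
    constructor <;> intro h <;> linear_combination h
  rw [forall_congr' fun z => imp_congr_left (hspec z)]
  set q : ℝ := a * c - β * N * ψ with hq
  have hR : R₀ < 1 ↔ 0 < q := by
    rw [hR₀, div_lt_one (by positivity), hq]
    constructor <;> intro h <;> nlinarith
  rw [hR]
  constructor
  · intro h
    by_contra hle
    push_neg at hle
    set s : ℝ := a + c with hs
    set r : ℝ := Real.sqrt (s^2 - 4*q) with hr
    have hr2 : r^2 = s^2 - 4*q := Real.sq_sqrt (by nlinarith)
    have hrs : s ≤ r := by
      rw [hr]
      calc s = Real.sqrt (s^2) := by rw [Real.sqrt_sq (by positivity)]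
        _ ≤ _ := Real.sqrt_le_sqrt (by nlinarith)
    set x : ℝ := (-s + r)/2 with hx
    have hxnn : 0 ≤ x := by rw [hx]; linarith
    have hroot : ((x:ℂ) + a) * ((x:ℂ) + c) - (β * N * ψ : ℝ) = 0 := by
      have : (x + a) * (x + c) - (β * N * ψ) = 0 := by
        rw [hx]
        field_simp
        nlinarith [hr2]
      calc ((x:ℂ) + a) * ((x:ℂ) + c) - (β * N * ψ : ℝ)
          = (((x + a) * (x + c) - (β * N * ψ) : ℝ) : ℂ) := by push_cast; ring
        _ = 0 := by rw [this]; norm_num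
    have := h x hroot
    simp at this
    linarith
  · intro hqpos z hz
    by_contra hge
    push_neg at hge
    set x : ℝ := z.re
    set y : ℝ := z.im
    push_cast at hz
    rw [Complex.ext_iff] at hz
    simp only [Complex.add_re, Complex.add_im, Complex.mul_re, Complex.mul_im,
      Complex.sub_re, Complex.sub_im, Complex.ofReal_re, Complex.ofReal_im,
      Complex.zero_re, Complex.zero_im] at hz
    obtain ⟨h1, h2⟩ := hz
    have him : y * (2*x + (a + c)) = 0 := by linear_combination h2
    have hre : x^2 - y^2 + (a+c)*x + (a*c - β*N*ψ) = 0 := by linear_combination h1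
    have hy : y = 0 := by
      rcases mul_eq_zero.1 him with h | h
      · exact h
      · nlinarith
    rw [hy] at hre
    nlinarith
end

section
/- Suppose γ, ψ > 0, μ + λ > δ, β ≥ 0, and let R₀ = βψN/((γ+ψ)(μ+λ−δ)) with N > 0. Define L(t) = (ψ/(γ+ψ))·V(t) + A_s(t) along solutions of the scam model with 0 ≤ S(t) ≤ N. Then L'(t) ≤ (μ+λ−δ)(R₀ − 1)·A_s(t) whenever V(t), A_s(t) ≥ 0. In particular if R₀ < 1 and A_s(t) ≥ 0 then L'(t) ≤ 0. -/
/-- The Lyapunov function `L = (ψ/(γ+ψ))V + A_s` satisfies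
`L' ≤ (μ+λ−δ)(R₀ − 1)A_s` along solutions; in particular `L' ≤ 0` if `R₀ < 1`. -/
theorem lyapunov_derivative_bound
    (γ ψ δ μ lam β N : ℝ)
    (hγ : 0 < γ) (hψ : 0 < ψ) (hmld : μ + lam > δ) (hβ : 0 ≤ β) (hN : 0 < N)
    (R₀ : ℝ) (hR₀ : R₀ = β * ψ * N / ((γ + ψ) * (μ + lam - δ)))
    (S V A : ℝ → ℝ)
    (hS : ∀ t, 0 ≤ S t ∧ S t ≤ N)
    (hV : ∀ t, HasDerivAt V (β * S t * A t - (γ + ψ) * V t) t)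
    (hA : ∀ t, HasDerivAt A ((δ - μ - lam) * A t + ψ * V t) t)
    (L : ℝ → ℝ) (hL : L = fun t => ψ / (γ + ψ) * V t + A t) :
    (∀ t, 0 ≤ V t → 0 ≤ A t →
      deriv L t ≤ (μ + lam - δ) * (R₀ - 1) * A t) ∧
    (R₀ < 1 → ∀ t, 0 ≤ V t → 0 ≤ A t → deriv L t ≤ 0) := by
  have hγψ : 0 < γ + ψ := by linarith
  have hmd : 0 < μ + lam - δ := by linarith
  have key : ∀ t, 0 ≤ V t → 0 ≤ A t →
      deriv L t ≤ (μ + lam - δ) * (R₀ - 1) * A t := by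
    intro t hVt hAt
    have hL' : HasDerivAt L (ψ / (γ + ψ) * (β * S t * A t - (γ + ψ) * V t)
        + ((δ - μ - lam) * A t + ψ * V t)) t := by
      rw [hL]
      exact ((hV t).const_mul _).add (hA t)
    rw [hL'.deriv]
    have hSle := (hS t).2
    have hSA : β * S t * A t ≤ β * N * A t := by
      apply mul_le_mul_of_nonneg_right _ hAt
      exact mul_le_mul_of_nonneg_left hSle hβ
    have hc : 0 ≤ ψ / (γ + ψ) := by positivity
    have h1 : ψ / (γ + ψ) * (β * S t * A t) ≤ ψ / (γ + ψ) * (β * N * A t) :=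
      mul_le_mul_of_nonneg_left hSA hc
    have hcancel : ψ / (γ + ψ) * ((γ + ψ) * V t) = ψ * V t := by
      field_simp
    have hRA : (μ + lam - δ) * (R₀ - 1) * A t
        = ψ / (γ + ψ) * (β * N * A t) + (δ - μ - lam) * A t := by
      rw [hR₀]
      field_simp
      ring
    rw [hRA]
    nlinarith [h1, hcancel]
  refine ⟨key, fun hR t hVt hAt => le_trans (key t hVt hAt) ?_⟩
  have h2 : 0 ≤ (μ + lam - δ) * A t := mul_nonneg hmd.le hAt
  nlinarith [mul_nonneg h2 (by linarith : (0:ℝ) ≤ 1 - R₀)]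
end

section
/- By induction, for any nonnegative initial vector (S₀, V₀, R₀, A₀, Rs₀) ∈ ℝ₊⁵ and any nonnegative parameters, the sequence generated by iterating the NSFD update map remains in the nonnegative orthant for all k ∈ ℕ. -/
/-- Iterating the NSFD update map from a nonnegative initial
vector keeps all compartments nonnegative for every `k ∈ ℕ`. -/
theorem nsfd_iterates_nonneg
    (β σ γ ψ δ μ lam θ : ℝ)
    (hβ : 0 ≤ β) (hσ : 0 ≤ σ) (hγ : 0 ≤ γ) (hψ : 0 ≤ ψ)
    (hδ : 0 ≤ δ) (hμ : 0 ≤ μ) (hlam : 0 ≤ lam) (hθ : 0 < θ)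
    (S V R A Rs : ℕ → ℝ)
    (hS0 : 0 ≤ S 0) (hV0 : 0 ≤ V 0) (hR0 : 0 ≤ R 0)
    (hA0 : 0 ≤ A 0) (hRs0 : 0 ≤ Rs 0)
    (hS : ∀ k, S (k + 1) = (S k + θ * σ * R k) / (1 + θ * β * A k))
    (hV : ∀ k, V (k + 1) = (V k + θ * β * S k * A k) / (1 + θ * (γ + ψ)))
    (hR : ∀ k, R (k + 1) = (R k + θ * γ * V k) / (1 + θ * σ))
    (hA : ∀ k, A (k + 1) = (A k * (1 + θ * δ) + θ * ψ * V k) / (1 + θ * (μ + lam)))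
    (hRs : ∀ k, Rs (k + 1) = Rs k + θ * lam * A (k + 1)) :
    ∀ k : ℕ, 0 ≤ S k ∧ 0 ≤ V k ∧ 0 ≤ R k ∧ 0 ≤ A k ∧ 0 ≤ Rs k := by
  intro k
  induction k with
  | zero => exact ⟨hS0, hV0, hR0, hA0, hRs0⟩
  | succ n ih =>
    obtain ⟨hSn, hVn, hRn, hAn, hRsn⟩ := ih
    have hθ' := hθ.le
    have hA1 : 0 ≤ A (n + 1) := by
      rw [hA]
      positivity
    refine ⟨?_, ?_, ?_, hA1, ?_⟩
    · rw [hS]; positivity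
    · rw [hV]; positivity
    · rw [hR]; positivity
    · rw [hRs]; positivity
end
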